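/- Let f_1,…,f_N ∈ ℝ be a histogram for the knots x_0 < ⋯ < x_N, set h_i = x_i − x_{i-1}, and assume each q_i is Lipschitz continuous. Suppose there exist y_0, y_N ∈ ℝ such that q_1(x_0) = y_0(1 − α_1), q_N(x_N) = y_N(1 − α_N), and α_{i+1} y_0 + q_{i+1}(x_0) = α_i y_N + q_i(x_N) for i = 1,…,N−1, and suppose ∫_{x_0}^{x_N} q_i(x) dx = (h_i f_i − α_i a_i ∑_{j=1}^N h_j f_j)/a_i for every i = 1,…,N. Then the bounded fractal function f is continuous on I and solves the histopolation problem: ∫_{x_{i-1}}^{x_i} f(x) dx = h_i f_i for every i = 1,…,N. -/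

import Mathlib

open Set

noncomputable def aC (x : ℕ → ℝ) (N i : ℕ) : ℝ := (x (i + 1) - x i) / (x N - x 0)

noncomputable def bC (x : ℕ → ℝ) (N i : ℕ) : ℝ := (x N * x i - x 0 * x (i + 1)) / (x N - x 0)

/-- The affine map `L i t = a i * t + b i`. -/
noncomputable def Lm (x : ℕ → ℝ) (N i : ℕ) (t : ℝ) : ℝ := aC x N i * t + bC x N i

noncomputable def Linv (x : ℕ → ℝ) (N i : ℕ) (u : ℝ) : ℝ := (u - bC x N i) / aC x N i

noncomputable def idxF (x : ℕ → ℝ) (N : ℕ) (u : ℝ) : ℕ :=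
  Nat.findGreatest (fun i => x i ≤ u) (N - 1)

noncomputable def Tmap (x : ℕ → ℝ) (N : ℕ) (α : ℕ → ℝ) (q : ℕ → ℝ → ℝ) (g : ℝ → ℝ)
    (u : ℝ) : ℝ :=
  α (idxF x N u) * g (Linv x N (idxF x N u) u) + q (idxF x N u) (Linv x N (idxF x N u) u)

noncomputable def gseq (x : ℕ → ℝ) (N : ℕ) (α : ℕ → ℝ) (q : ℕ → ℝ → ℝ) (y0 yN : ℝ) :
    ℕ → ℝ → ℝ
  | 0 => fun u => y0 + (yN - y0) * ((u - x 0) / (x N - x 0))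
  | n + 1 => Tmap x N α q (gseq x N α q y0 yN n)

section basic

variable {N : ℕ} {x : ℕ → ℝ}

lemma xmono (hx : ∀ i, i < N → x i < x (i + 1)) {i j : ℕ} (hij : i ≤ j) (hj : j ≤ N) :
    x i ≤ x j := by
  induction j with
  | zero => simpa [Nat.le_zero.mp hij] using le_rfl
  | succ m ih =>
    rcases Nat.lt_or_ge i (m + 1) with h | h
    · exact le_trans (ih (by omega) (by omega)) (le_of_lt (hx m (by omega)))
    · have : i = m + 1 := le_antisymm hij h
      simp [this]

lemma x0N (hN : 1 ≤ N) (hx : ∀ i, i < N → x i < x (i + 1)) : x 0 < x N :=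
  lt_of_lt_of_le (hx 0 (by omega)) (xmono hx (by omega) le_rfl)

lemma aC_pos (hN : 1 ≤ N) (hx : ∀ i, i < N → x i < x (i + 1)) {i : ℕ} (hi : i < N) :
    0 < aC x N i :=
  div_pos (sub_pos.mpr (hx i hi)) (sub_pos.mpr (x0N hN hx))

lemma Lm_zero (hN : 1 ≤ N) (hx : ∀ i, i < N → x i < x (i + 1)) (i : ℕ) :
    Lm x N i (x 0) = x i := by
  have hd : x N - x 0 ≠ 0 := ne_of_gt (sub_pos.mpr (x0N hN hx))
  unfold Lm aC bC
  field_simp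
  ring

lemma Lm_last (hN : 1 ≤ N) (hx : ∀ i, i < N → x i < x (i + 1)) (i : ℕ) :
    Lm x N i (x N) = x (i + 1) := by
  have hd : x N - x 0 ≠ 0 := ne_of_gt (sub_pos.mpr (x0N hN hx))
  unfold Lm aC bC
  field_simp
  ring

lemma Linv_eq (ha : aC x N i ≠ 0) {t u : ℝ} (h : Lm x N i t = u) : Linv x N i u = t := by
  unfold Lm at h
  unfold Linv
  field_simp
  linarith

lemma Lm_Linv (ha : aC x N i ≠ 0) (u : ℝ) : Lm x N i (Linv x N i u) = u := by
  unfold Lm Linv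
  field_simp
  ring

lemma Linv_mem_Icc (hN : 1 ≤ N) (hx : ∀ i, i < N → x i < x (i + 1)) {i : ℕ} (hi : i < N)
    {u : ℝ} (hu : u ∈ Icc (x i) (x (i + 1))) : Linv x N i u ∈ Icc (x 0) (x N) := by
  have ha := aC_pos hN hx hi
  have h0 := Lm_zero hN hx i
  have h1 := Lm_last hN hx i
  unfold Lm at h0 h1
  unfold Linv
  constructor
  · rw [le_div_iff₀ ha]
    have := hu.1
    linarith
  · rw [div_le_iff₀ ha]
    have := hu.2
    linarith

lemma Linv_mem_Ico (hN : 1 ≤ N) (hx : ∀ i, i < N → x i < x (i + 1)) {i : ℕ} (hi : i < N)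
    {u : ℝ} (hu : u ∈ Ico (x i) (x (i + 1))) : Linv x N i u ∈ Ico (x 0) (x N) := by
  have ha := aC_pos hN hx hi
  have h0 := Lm_zero hN hx i
  have h1 := Lm_last hN hx i
  unfold Lm at h0 h1
  unfold Linv
  constructor
  · rw [le_div_iff₀ ha]
    have := hu.1
    linarith
  · rw [div_lt_iff₀ ha]
    have := hu.2
    linarith

lemma idx_lt (hN : 1 ≤ N) (u : ℝ) : idxF x N u < N :=
  lt_of_le_of_lt (Nat.findGreatest_le _) (by omega)

lemma idx_le (hN : 1 ≤ N) {u : ℝ} (hu : x 0 ≤ u) : x (idxF x N u) ≤ u :=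
  Nat.findGreatest_spec (P := fun i => x i ≤ u) (m := 0) (Nat.zero_le _) hu

lemma idx_gt (hN : 1 ≤ N) (hx : ∀ i, i < N → x i < x (i + 1)) {u : ℝ} (hu : u < x N) :
    u < x (idxF x N u + 1) := by
  classical
  by_contra h
  push_neg at h
  unfold idxF at *
  rcases Nat.lt_or_ge (Nat.findGreatest (fun i => x i ≤ u) (N - 1) + 1) N with h1 | h1
  · have := Nat.le_findGreatest (P := fun i => x i ≤ u) (n := N - 1)
      (m := Nat.findGreatest (fun i => x i ≤ u) (N - 1) + 1) (by omega) h
    omega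
  · have hle : Nat.findGreatest (fun i => x i ≤ u) (N - 1) + 1 ≤ N := by
      have := Nat.findGreatest_le (P := fun i => x i ≤ u) (n := N - 1)
      omega
    have heq : Nat.findGreatest (fun i => x i ≤ u) (N - 1) + 1 = N := le_antisymm hle h1
    rw [heq] at h
    linarith

lemma idx_eq (hN : 1 ≤ N) (hx : ∀ i, i < N → x i < x (i + 1)) {i : ℕ} (hi : i < N)
    {u : ℝ} (h1 : x i ≤ u) (h2 : u < x (i + 1)) : idxF x N u = i := by
  unfold idxF
  refine le_antisymm ?_ (Nat.le_findGreatest (by omega) h1)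
  by_contra h
  push_neg at h
  have hle : Nat.findGreatest (fun i => x i ≤ u) (N - 1) ≤ N - 1 := Nat.findGreatest_le _
  have hspec : x (Nat.findGreatest (fun i => x i ≤ u) (N - 1)) ≤ u :=
    Nat.findGreatest_spec (P := fun i => x i ≤ u) (m := 0) (Nat.zero_le _)
      (le_trans (xmono hx (by omega) (by omega)) h1)
  have : x (i + 1) ≤ x (Nat.findGreatest (fun i => x i ≤ u) (N - 1)) := xmono hx (by omega) (by omega)
  linarith

lemma idx_xN (hN : 1 ≤ N) (hx : ∀ i, i < N → x i < x (i + 1)) : idxF x N (x N) = N - 1 := by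
  unfold idxF
  refine le_antisymm (Nat.findGreatest_le _) ?_
  exact Nat.le_findGreatest le_rfl (xmono hx (by omega) le_rfl)

lemma contOn_union {f : ℝ → ℝ} {s t : Set ℝ} (hs : IsClosed s) (ht : IsClosed t)
    (h1 : ContinuousOn f s) (h2 : ContinuousOn f t) : ContinuousOn f (s ∪ t) := by
  intro z hz
  have Hs : ContinuousWithinAt f s z := by
    by_cases h : z ∈ s
    · exact h1 z h
    · exact continuousWithinAt_of_notMem_closure (by rwa [hs.closure_eq])
  have Ht : ContinuousWithinAt f t z := by
    by_cases h : z ∈ t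
    · exact h2 z h
    · exact continuousWithinAt_of_notMem_closure (by rwa [ht.closure_eq])
  exact Hs.union Ht

lemma q_contOn {q : ℝ → ℝ} {s : Set ℝ} {C : ℝ}
    (h : ∀ u ∈ s, ∀ v ∈ s, |q u - q v| ≤ C * |u - v|) : ContinuousOn q s := by
  have : LipschitzOnWith (Real.toNNReal C) q s := by
    rw [lipschitzOnWith_iff_dist_le_mul]
    intro u hu v hv
    rw [Real.dist_eq, Real.dist_eq, Real.coe_toNNReal']
    exact le_trans (h u hu v hv)
      (mul_le_mul_of_nonneg_right (le_max_left _ _) (abs_nonneg _))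
  exact this.continuousOn

end basic

section tc
variable {N : ℕ} {x : ℕ → ℝ} {α : ℕ → ℝ} {q : ℕ → ℝ → ℝ} {y0 yN : ℝ}

lemma Tmap_piece (hN : 2 ≤ N) (hx : ∀ i, i < N → x i < x (i + 1))
    (hjoin : ∀ i, i + 1 < N → α (i + 1) * y0 + q (i + 1) (x 0) = α i * yN + q i (x N))
    {g : ℝ → ℝ} (hg0 : g (x 0) = y0) (hgN : g (x N) = yN)
    {i : ℕ} (hi : i < N) :
    EqOn (Tmap x N α q g)
      (fun u => α i * g (Linv x N i u) + q i (Linv x N i u)) (Icc (x i) (x (i + 1))) := by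
  have hN1 : 1 ≤ N := by omega
  have ha : ∀ j, j < N → aC x N j ≠ 0 := fun j hj => ne_of_gt (aC_pos hN1 hx hj)
  intro u hu
  rcases lt_or_eq_of_le hu.2 with h2 | h2
  · have hidx : idxF x N u = i := idx_eq hN1 hx hi hu.1 h2
    simp only [Tmap, hidx]
  · -- u = x (i+1)
    have hLinv_i : Linv x N i u = x N := by
      rw [h2]; exact Linv_eq (ha i hi) (Lm_last hN1 hx i)
    by_cases hi1 : i + 1 < N
    · have hidx : idxF x N u = i + 1 := by
        rw [h2]; exact idx_eq hN1 hx hi1 le_rfl (hx (i + 1) hi1)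
      have hLinv1 : Linv x N (i + 1) u = x 0 := by
        rw [h2]; exact Linv_eq (ha (i + 1) hi1) (Lm_zero hN1 hx (i + 1))
      simp only [Tmap, hidx, hLinv1, hLinv_i, hg0, hgN]
      exact hjoin i hi1
    · have hiN : i = N - 1 := by omega
      have hxiN : x (i + 1) = x N := by rw [show i + 1 = N by omega]
      have hidx : idxF x N u = i := by
        rw [h2, hxiN, idx_xN hN1 hx, hiN]
      simp only [Tmap, hidx]

lemma Tmap_cont (hN : 2 ≤ N) (hx : ∀ i, i < N → x i < x (i + 1))
    (hq : ∀ i, i < N → ∃ C, ∀ u ∈ Icc (x 0) (x N), ∀ v ∈ Icc (x 0) (x N),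
      |q i u - q i v| ≤ C * |u - v|)
    (hj0 : q 0 (x 0) = y0 * (1 - α 0))
    (hjN : q (N - 1) (x N) = yN * (1 - α (N - 1)))
    (hjoin : ∀ i, i + 1 < N → α (i + 1) * y0 + q (i + 1) (x 0) = α i * yN + q i (x N))
    {g : ℝ → ℝ} (hg : ContinuousOn g (Icc (x 0) (x N)))
    (hg0 : g (x 0) = y0) (hgN : g (x N) = yN) :
    ContinuousOn (Tmap x N α q g) (Icc (x 0) (x N)) ∧
      Tmap x N α q g (x 0) = y0 ∧ Tmap x N α q g (x N) = yN := by
  have hN1 : 1 ≤ N := by omega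
  have ha : ∀ j, j < N → aC x N j ≠ 0 := fun j hj => ne_of_gt (aC_pos hN1 hx hj)
  have hφ : ∀ i, i < N →
      ContinuousOn (fun u => α i * g (Linv x N i u) + q i (Linv x N i u))
        (Icc (x i) (x (i + 1))) := by
    intro i hi
    have hLc : Continuous (fun u => Linv x N i u) := by
      unfold Linv
      exact (continuous_id.sub continuous_const).div_const _
    have hmaps : MapsTo (fun u => Linv x N i u) (Icc (x i) (x (i + 1))) (Icc (x 0) (x N)) :=
      fun u hu => Linv_mem_Icc hN1 hx hi hu
    obtain ⟨C, hC⟩ := hq i hi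
    have hqc : ContinuousOn (q i) (Icc (x 0) (x N)) := q_contOn hC
    exact ((continuousOn_const.mul (hg.comp hLc.continuousOn hmaps)).add
      (hqc.comp hLc.continuousOn hmaps))
  have hpieces : ∀ i, i < N → ContinuousOn (Tmap x N α q g) (Icc (x i) (x (i + 1))) :=
    fun i hi => (hφ i hi).congr (Tmap_piece hN hx hjoin hg0 hgN hi)
  have hall : ∀ j, j < N → ContinuousOn (Tmap x N α q g) (Icc (x 0) (x (j + 1))) := by
    intro j
    induction j with
    | zero => intro hj; exact hpieces 0 hj
    | succ m ih =>
      intro hj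
      have h1 : ContinuousOn (Tmap x N α q g) (Icc (x 0) (x (m + 1))) := ih (by omega)
      have h2 := hpieces (m + 1) hj
      have hun : Icc (x 0) (x (m + 1)) ∪ Icc (x (m + 1)) (x (m + 2)) =
          Icc (x 0) (x (m + 2)) :=
        Icc_union_Icc_eq_Icc (xmono hx (by omega) (by omega)) (le_of_lt (hx (m + 1) hj))
      rw [← hun]
      exact contOn_union isClosed_Icc isClosed_Icc h1 h2
  refine ⟨?_, ?_, ?_⟩
  · have := hall (N - 1) (by omega)
    rwa [show N - 1 + 1 = N by omega] at this
  · have hidx : idxF x N (x 0) = 0 := idx_eq hN1 hx (by omega) le_rfl (hx 0 (by omega))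
    have hL : Linv x N 0 (x 0) = x 0 := Linv_eq (ha 0 (by omega)) (Lm_zero hN1 hx 0)
    simp only [Tmap, hidx, hL, hg0, hj0]
    ring
  · have hidx : idxF x N (x N) = N - 1 := idx_xN hN1 hx
    have hL : Linv x N (N - 1) (x N) = x N := by
      refine Linv_eq (ha (N - 1) (by omega)) ?_
      have := Lm_last hN1 hx (N - 1)
      rwa [show N - 1 + 1 = N by omega] at this
    simp only [Tmap, hidx, hL, hgN, hjN]
    ring
end tc

/-- If the `q i` satisfy the continuity (join-up) conditions for some `y0, yN` and the
histopolation integral conditions, then the bounded fractal function is continuous on `I`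
and solves the histopolation problem. -/
theorem stmt19
    (N : ℕ) (hN : 2 ≤ N)
    (x : ℕ → ℝ)
    (hx : ∀ i, i < N → x i < x (i + 1))
    (α : ℕ → ℝ) (hα : ∀ i, i < N → |α i| < 1)
    (q : ℕ → ℝ → ℝ)
    (hq : ∀ i, i < N → ∃ C, ∀ u ∈ Icc (x 0) (x N), ∀ v ∈ Icc (x 0) (x N),
      |q i u - q i v| ≤ C * |u - v|)
    (f : ℝ → ℝ)
    (hfb : ∃ M, ∀ t ∈ Icc (x 0) (x N), |f t| ≤ M)
    (hfe : ∀ i, i < N → ∀ t ∈ Ico (x 0) (x N), f (Lm x N i t) = α i * f t + q i t)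
    (hfeN : f (Lm x N (N - 1) (x N)) = α (N - 1) * f (x N) + q (N - 1) (x N))
    (c : ℕ → ℝ)
    (y0 yN : ℝ)
    (hj0 : q 0 (x 0) = y0 * (1 - α 0))
    (hjN : q (N - 1) (x N) = yN * (1 - α (N - 1)))
    (hjoin : ∀ i, i + 1 < N → α (i + 1) * y0 + q (i + 1) (x 0) = α i * yN + q i (x N))
    (hint : ∀ i, i < N → ∫ t in (x 0)..(x N), q i t =
      ((x (i + 1) - x i) * c i -
        α i * aC x N i * ∑ j ∈ Finset.range N, (x (j + 1) - x j) * c j) / aC x N i) :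
    ContinuousOn f (Icc (x 0) (x N)) ∧
    ∀ i, i < N → ∫ t in (x i)..(x (i + 1)), f t = (x (i + 1) - x i) * c i := by
  have hN1 : 1 ≤ N := by omega
  have hd : (0:ℝ) < x N - x 0 := sub_pos.mpr (x0N hN1 hx)
  have hane : ∀ j, j < N → aC x N j ≠ 0 := fun j hj => ne_of_gt (aC_pos hN1 hx hj)
  have hLmN : Lm x N (N - 1) (x N) = x N := by
    have := Lm_last hN1 hx (N - 1)
    rwa [show N - 1 + 1 = N by omega] at this
  have hLinvN : Linv x N (N - 1) (x N) = x N := Linv_eq (hane (N - 1) (by omega)) hLmN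
  -- f is a fixed point of Tmap on Icc
  have hfix : ∀ u ∈ Icc (x 0) (x N), f u = Tmap x N α q f u := by
    intro u hu
    rcases lt_or_eq_of_le hu.2 with h2 | h2
    · have hiN : idxF x N u < N := idx_lt hN1 u
      have hmem : u ∈ Ico (x (idxF x N u)) (x (idxF x N u + 1)) :=
        ⟨idx_le hN1 hu.1, idx_gt hN1 hx h2⟩
      have ht : Linv x N (idxF x N u) u ∈ Ico (x 0) (x N) := Linv_mem_Ico hN1 hx hiN hmem
      have := hfe _ hiN _ ht
      rw [Lm_Linv (hane _ hiN)] at this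
      simpa [Tmap] using this
    · rw [h2]
      rw [hLmN] at hfeN
      simp only [Tmap, idx_xN hN1 hx, hLinvN]
      exact hfeN
  obtain ⟨M, hM⟩ := hfb
  have hNr : (Finset.range N).Nonempty := ⟨0, Finset.mem_range.mpr (by omega)⟩
  set k := (Finset.range N).sup' hNr (fun i => |α i|) with hkdef
  have hk1 : k < 1 := (Finset.sup'_lt_iff hNr).mpr fun i hi => hα i (Finset.mem_range.mp hi)
  have hkα : ∀ i, i < N → |α i| ≤ k := fun i hi =>
    Finset.le_sup' (fun i => |α i|) (Finset.mem_range.mpr hi)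
  have hk0 : 0 ≤ k := le_trans (abs_nonneg (α 0)) (hkα 0 (by omega))
  set G := gseq x N α q y0 yN with hGdef
  have hGp : ∀ n, ContinuousOn (G n) (Icc (x 0) (x N)) ∧ G n (x 0) = y0 ∧ G n (x N) = yN := by
    intro n
    induction n with
    | zero =>
      refine ⟨?_, ?_, ?_⟩
      · show ContinuousOn (fun u => y0 + (yN - y0) * ((u - x 0) / (x N - x 0))) _
        exact (continuous_const.add (continuous_const.mul
          ((continuous_id.sub continuous_const).div_const _))).continuousOn
      · show y0 + (yN - y0) * ((x 0 - x 0) / (x N - x 0)) = y0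
        simp
      · show y0 + (yN - y0) * ((x N - x 0) / (x N - x 0)) = yN
        rw [div_self (ne_of_gt hd)]
        ring
    | succ m ih => exact Tmap_cont hN hx hq hj0 hjN hjoin ih.1 ih.2.1 ih.2.2
  set M0 := M + (|y0| + |yN - y0|) with hM0def
  have hit : ∀ n, ∀ u ∈ Icc (x 0) (x N), |f u - G n u| ≤ k ^ n * M0 := by
    intro n
    induction n with
    | zero =>
      intro u hu
      simp only [pow_zero, one_mul]
      have hr0 : 0 ≤ (u - x 0) / (x N - x 0) := div_nonneg (by linarith [hu.1]) (le_of_lt hd)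
      have hr1 : (u - x 0) / (x N - x 0) ≤ 1 := by
        rw [div_le_one hd]; linarith [hu.2]
      have h2 : |G 0 u| ≤ |y0| + |yN - y0| := by
        show |y0 + (yN - y0) * ((u - x 0) / (x N - x 0))| ≤ _
        refine le_trans (abs_add_le _ _) ?_
        have : |(yN - y0) * ((u - x 0) / (x N - x 0))| ≤ |yN - y0| * 1 := by
          rw [abs_mul]
          exact mul_le_mul_of_nonneg_left (by rwa [abs_of_nonneg hr0]) (abs_nonneg _)
        linarith
      have h1 : |f u| ≤ M := hM u hu
      calc |f u - G 0 u| ≤ |f u| + |G 0 u| := abs_sub _ _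
        _ ≤ M0 := by rw [hM0def]; linarith
    | succ m ih =>
      intro u hu
      have hiN : idxF x N u < N := idx_lt hN1 u
      have ht : Linv x N (idxF x N u) u ∈ Icc (x 0) (x N) := by
        rcases lt_or_eq_of_le hu.2 with h2 | h2
        · exact Ico_subset_Icc_self (Linv_mem_Ico hN1 hx hiN ⟨idx_le hN1 hu.1, idx_gt hN1 hx h2⟩)
        · rw [h2, idx_xN hN1 hx, hLinvN]
          exact ⟨le_of_lt (x0N hN1 hx), le_rfl⟩
      have e2 : G (m + 1) u = Tmap x N α q (G m) u := rfl
      rw [hfix u hu, e2]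
      have e3 : Tmap x N α q f u - Tmap x N α q (G m) u =
          α (idxF x N u) * (f (Linv x N (idxF x N u) u) - G m (Linv x N (idxF x N u) u)) := by
        simp only [Tmap]; ring
      rw [e3, abs_mul, pow_succ', mul_assoc]
      exact mul_le_mul (hkα _ hiN) (ih _ ht) (abs_nonneg _) hk0
  have hcont : ContinuousOn f (Icc (x 0) (x N)) := by
    have htend : Filter.Tendsto (fun n => k ^ n * M0) Filter.atTop (nhds 0) := by
      have := (tendsto_pow_atTop_nhds_zero_of_lt_one hk0 hk1).mul_const M0
      simpa using this
    have hTU : TendstoUniformlyOn G f Filter.atTop (Icc (x 0) (x N)) := by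
      rw [Metric.tendstoUniformlyOn_iff]
      intro ε hε
      filter_upwards [htend.eventually_lt_const hε] with n hn u hu
      rw [Real.dist_eq]
      exact lt_of_le_of_lt (hit n u hu) hn
    exact hTU.continuousOn (Filter.Frequently.of_forall fun n => (hGp n).1)
  refine ⟨hcont, ?_⟩
  -- integral part
  have hx0N : x 0 ≤ x N := le_of_lt (x0N hN1 hx)
  have hsubI : ∀ i, i < N → Icc (x i) (x (i + 1)) ⊆ Icc (x 0) (x N) := by
    intro i hi
    exact Icc_subset_Icc (xmono hx (by omega) (by omega)) (xmono hx (by omega) (by omega))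
  have hfint : ∀ i, i < N → IntervalIntegrable f MeasureTheory.volume (x i) (x (i + 1)) :=
    fun i hi => (hcont.mono (hsubI i hi)).intervalIntegrable_of_Icc (le_of_lt (hx i hi))
  have hfI : IntervalIntegrable f MeasureTheory.volume (x 0) (x N) :=
    hcont.intervalIntegrable_of_Icc hx0N
  have hqint : ∀ i, i < N → IntervalIntegrable (q i) MeasureTheory.volume (x 0) (x N) := by
    intro i hi
    obtain ⟨C, hC⟩ := hq i hi
    exact (q_contOn hC).intervalIntegrable_of_Icc hx0N
  set S := ∫ t in (x 0)..(x N), f t with hSdef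
  set Sc := ∑ j ∈ Finset.range N, (x (j + 1) - x j) * c j with hScdef
  have key : ∀ i, i < N → ∫ t in (x i)..(x (i + 1)), f t =
      aC x N i * α i * S + ((x (i + 1) - x i) * c i - aC x N i * α i * Sc) := by
    intro i hi
    have hsub := intervalIntegral.integral_comp_mul_add (a := x 0) (b := x N) f
      (hane i hi) (bC x N i)
    have hL0 : aC x N i * x 0 + bC x N i = x i := Lm_zero hN1 hx i
    have hL1 : aC x N i * x N + bC x N i = x (i + 1) := Lm_last hN1 hx i
    rw [hL0, hL1] at hsub
    have hae : (∫ t in (x 0)..(x N), f (aC x N i * t + bC x N i)) =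
        ∫ t in (x 0)..(x N), (α i * f t + q i t) := by
      apply intervalIntegral.integral_congr_ae
      have h1 : ∀ᵐ (t : ℝ) ∂MeasureTheory.volume, t ≠ x N := by
        rw [MeasureTheory.ae_iff]
        simp [not_not, Set.setOf_eq_eq_singleton, Real.volume_singleton]
      filter_upwards [h1] with t htne hmem
      rw [uIoc_of_le hx0N] at hmem
      have htI : t ∈ Ico (x 0) (x N) := ⟨le_of_lt hmem.1, lt_of_le_of_ne hmem.2 htne⟩
      exact hfe i hi t htI
    have hsplit : (∫ t in (x 0)..(x N), (α i * f t + q i t)) =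
        α i * S + ∫ t in (x 0)..(x N), q i t := by
      rw [intervalIntegral.integral_add (hfI.const_mul _) (hqint i hi),
        intervalIntegral.integral_const_mul]
    rw [hae, hsplit, hint i hi] at hsub
    have ha := hane i hi
    rw [smul_eq_mul] at hsub
    field_simp at hsub ⊢
    linarith [hsub]
  have hA1 : ∑ i ∈ Finset.range N, aC x N i = 1 := by
    unfold aC
    rw [← Finset.sum_div, Finset.sum_range_sub (f := x)]
    exact div_self (ne_of_gt hd)
  have hAlt : ∑ i ∈ Finset.range N, aC x N i * α i < 1 := by
    rw [← hA1]
    refine Finset.sum_lt_sum_of_nonempty hNr ?_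
    intro i hi
    have hi' := Finset.mem_range.mp hi
    have ha := aC_pos hN1 hx hi'
    have : α i < 1 := lt_of_le_of_lt (le_abs_self _) (hα i hi')
    nlinarith
  have hsum : ∑ i ∈ Finset.range N, ∫ t in (x i)..(x (i + 1)), f t = S :=
    intervalIntegral.sum_integral_adjacent_intervals (fun i hi => hfint i hi)
  set A := ∑ i ∈ Finset.range N, aC x N i * α i with hAdef
  have hSe : S = A * S + Sc - A * Sc := by
    calc S = ∑ i ∈ Finset.range N, ∫ t in (x i)..(x (i + 1)), f t := hsum.symm
      _ = ∑ i ∈ Finset.range N,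
          (aC x N i * α i * S + ((x (i + 1) - x i) * c i - aC x N i * α i * Sc)) :=
        Finset.sum_congr rfl fun i hi => key i (Finset.mem_range.mp hi)
      _ = A * S + Sc - A * Sc := by
        rw [Finset.sum_add_distrib, Finset.sum_sub_distrib, ← Finset.sum_mul,
          ← Finset.sum_mul, ← hAdef, ← hScdef]
        ring
  have hSS : S = Sc := by
    have h0 : (1 - A) * (S - Sc) = 0 := by ring_nf; linarith [hSe]
    rcases mul_eq_zero.mp h0 with h | h
    · exfalso; rw [hAdef] at hAlt; linarith [h]
    · linarith [sub_eq_zero.mp h]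
  intro i hi
  rw [key i hi, hSS]
  ring
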